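/- Let γ = arccos(1/3) and θ₃ = 2π/3. Then 2·arctan( √(cos²(γ/2) − cos²(θ₃/2)) / cos(θ₃/2) ) = 2π/3 − arccos((3φ−1)/4), where φ = (1+√5)/2. -/
import Mathlib

open Real

theorem stmt3 (γ θ₃ φ : ℝ) (hγ : γ = Real.arccos (1 / 3))
    (hθ : θ₃ = 2 * Real.pi / 3) (hφ : φ = (1 + Real.sqrt 5) / 2) :
    2 * Real.arctan (Real.sqrt (Real.cos (γ / 2) ^ 2 - Real.cos (θ₃ / 2) ^ 2)
        / Real.cos (θ₃ / 2))
      = 2 * Real.pi / 3 - Real.arccos ((3 * φ - 1) / 4) := by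
  have hcosγ : Real.cos γ = 1/3 := by
    rw [hγ]; exact Real.cos_arccos (by norm_num) (by norm_num)
  have hsqγ : Real.cos (γ/2) ^ 2 = 2/3 := by
    have h := Real.cos_sq (γ/2)
    rw [show 2 * (γ/2) = γ by ring, hcosγ] at h
    rw [h]; norm_num
  have hθ2 : Real.cos (θ₃/2) = 1/2 := by
    rw [hθ, show 2 * Real.pi / 3 / 2 = Real.pi / 3 by ring, Real.cos_pi_div_three]
  rw [hsqγ, hθ2]
  have harg : Real.sqrt (2/3 - (1/2:ℝ)^2) / (1/2) = Real.sqrt (5/12) * 2 := by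
    norm_num; ring
  rw [harg]
  set x : ℝ := Real.sqrt (5/12) * 2 with hx
  have hx2 : x ^ 2 = 5/3 := by
    rw [hx, mul_pow, Real.sq_sqrt (by norm_num : (5:ℝ)/12 ≥ 0)]; norm_num
  have hxpos : 0 < x := by positivity
  set a : ℝ := Real.arctan x with ha
  have hapos : 0 < a := by rw [ha, ← Real.arctan_zero]; exact Real.arctan_strictMono hxpos
  have halt : a < Real.pi / 2 := Real.arctan_lt_pi_div_two x
  -- cos (2a) = -1/4
  have hcos2a : Real.cos (2 * a) = -(1/4) := by
    rw [Real.cos_two_mul, ha, Real.cos_arctan, hx2]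
    rw [div_pow, one_pow, Real.sq_sqrt (by norm_num : (0:ℝ) ≤ 1 + 5/3)]
    norm_num
  have h2a : 2 * a = Real.arccos (-(1/4)) := by
    rw [← hcos2a, Real.arccos_cos (by linarith) (by linarith)]
  set A : ℝ := Real.arccos (-(1/4)) with hA
  have hA0 : 0 ≤ A := Real.arccos_nonneg _
  have hA23 : A ≤ 2 * Real.pi / 3 := by
    have h23 : Real.arccos (-(1/2)) = 2 * Real.pi / 3 := by
      have : Real.cos (2 * Real.pi / 3) = -(1/2) := by
        rw [show 2 * Real.pi / 3 = Real.pi - Real.pi / 3 by ring, Real.cos_pi_sub,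
          Real.cos_pi_div_three]
      rw [← this, Real.arccos_cos (by positivity) (by nlinarith [Real.pi_pos])]
    rw [← h23, hA, Real.arccos_eq_pi_div_two_sub_arcsin, Real.arccos_eq_pi_div_two_sub_arcsin]
    have := Real.monotone_arcsin (by norm_num : (-(1/2):ℝ) ≤ -(1/4))
    linarith
  have hsinA : Real.sin A = Real.sqrt (15/16) := by
    rw [hA, Real.sin_arccos]; norm_num
  have hcosA : Real.cos A = -(1/4) := Real.cos_arccos (by norm_num) (by norm_num)
  have hkey : Real.cos (2 * Real.pi / 3 - A) = (3 * φ - 1) / 4 := by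
    rw [Real.cos_sub, hcosA, hsinA,
      show 2 * Real.pi / 3 = Real.pi - Real.pi / 3 by ring, Real.cos_pi_sub,
      Real.sin_pi_sub, Real.cos_pi_div_three, Real.sin_pi_div_three, hφ]
    have h1 : Real.sqrt 3 * Real.sqrt (15/16) = Real.sqrt (45/16) := by
      rw [← Real.sqrt_mul (by norm_num : (0:ℝ) ≤ 3)]; norm_num
    have h2 : Real.sqrt (45/16) = 3/4 * Real.sqrt 5 := by
      rw [show (45:ℝ)/16 = (3/4)^2 * 5 by norm_num,
        Real.sqrt_mul (by positivity), Real.sqrt_sq (by norm_num)]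
    nlinarith [h1, h2]
  have hrec : Real.arccos ((3 * φ - 1) / 4) = 2 * Real.pi / 3 - A := by
    rw [← hkey, Real.arccos_cos (by linarith) (by nlinarith [Real.pi_pos])]
  rw [hrec]
  linarith [h2a]
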